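/- arXiv:math/0402168 — 3 statements merged into one kernel-verified Lean document; each statement's English description precedes it below -/
import Mathlib

section
/- With η_n and γ_n as the coefficients of the Laurent expansions of −ζ'/ζ and ζ at s=1, one has η_2 = −γ_0^3 + 3γ_0γ_1 − 3γ_2. -/
open Filter Complex FormalMultilinearSeries
open scoped Topology ENNReal

open Filter Complex FormalMultilinearSeries
open scoped Topology ENNReal

private lemma radius_pos_of_hasSum {c : ℕ → ℂ} {h : ℂ → ℂ}
    (hs : ∀ᶠ s in 𝓝[≠] (0:ℂ), HasSum (fun n : ℕ => c n * s ^ n) (h s)) :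
    0 < (ofScalars ℂ c).radius := by
  haveI : (𝓝[≠] (0:ℂ)).NeBot := NormedField.nhdsNE_neBot (0:ℂ)
  obtain ⟨t, ht, htne⟩ := (hs.and self_mem_nhdsWithin).exists
  have htne : t ≠ 0 := htne
  have h0 : Tendsto (fun n => ‖c n * t ^ n‖) atTop (𝓝 0) := by
    simpa using ht.summable.tendsto_atTop_zero.norm
  have hb : ∀ᶠ n in atTop, ‖(ofScalars ℂ c) n‖ * (‖t‖₊ : ℝ) ^ n ≤ 1 := by
    filter_upwards [h0.eventually_le_const (by norm_num : (0:ℝ) < 1)] with n hn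
    calc ‖(ofScalars ℂ c) n‖ * (‖t‖₊ : ℝ) ^ n = ‖c n * t ^ n‖ := by
          rw [ofScalars_norm]; simp [norm_mul, norm_pow]
      _ ≤ 1 := hn
  have h1 : (‖t‖₊ : ℝ≥0∞) ≤ (ofScalars ℂ c).radius :=
    (ofScalars ℂ c).le_radius_of_eventually_le 1 hb
  refine lt_of_lt_of_le ?_ h1
  simpa using htne

private lemma eventually_eq_sum {c : ℕ → ℂ} {h : ℂ → ℂ}
    (hs : ∀ᶠ s in 𝓝[≠] (0:ℂ), HasSum (fun n : ℕ => c n * s ^ n) (h s)) :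
    ∀ᶠ s in 𝓝[≠] (0:ℂ), (ofScalars ℂ c).sum s = h s := by
  have hr := radius_pos_of_hasSum hs
  have hball : ∀ᶠ s in 𝓝[≠] (0:ℂ), s ∈ EMetric.ball (0:ℂ) (ofScalars ℂ c).radius :=
    eventually_nhdsWithin_of_eventually_nhds (EMetric.ball_mem_nhds 0 hr)
  filter_upwards [hs, hball] with s h1 h2
  have h3 : HasSum (fun n : ℕ => c n * s ^ n) ((ofScalars ℂ c).sum s) := by
    have := (ofScalars ℂ c).hasSum h2
    refine this.congr_fun fun n => ?_
    rw [ofScalars_apply_eq, smul_eq_mul]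
  exact h3.unique h1

private lemma tendsto_coeff_zero {c : ℕ → ℂ} {h : ℂ → ℂ}
    (hs : ∀ᶠ s in 𝓝[≠] (0:ℂ), HasSum (fun n : ℕ => c n * s ^ n) (h s)) :
    Tendsto h (𝓝[≠] (0:ℂ)) (𝓝 (c 0)) := by
  have hr := radius_pos_of_hasSum hs
  have hp := (ofScalars ℂ c).hasFPowerSeriesOnBall hr
  have hcont : ContinuousAt (ofScalars ℂ c).sum 0 := hp.analyticAt.continuousAt
  have h0 : (ofScalars ℂ c).sum 0 = c 0 := by
    have : (ofScalars ℂ c).sum 0 = ofScalarsSum c 0 := rfl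
    rw [this, ofScalarsSum_zero]; simp
  have := (hcont.tendsto.mono_left nhdsWithin_le_nhds).congr' (eventually_eq_sum hs)
  rwa [h0] at this

private lemma hasSum_shift {c : ℕ → ℂ} {h : ℂ → ℂ}
    (hs : ∀ᶠ s in 𝓝[≠] (0:ℂ), HasSum (fun n : ℕ => c n * s ^ n) (h s)) :
    ∀ᶠ s in 𝓝[≠] (0:ℂ),
      HasSum (fun n : ℕ => c (n + 1) * s ^ n) ((h s - c 0) / s) := by
  filter_upwards [hs, self_mem_nhdsWithin] with s h1 (h2 : s ≠ 0)
  have h3 : HasSum (fun n : ℕ => c (n + 1) * s ^ (n + 1)) (h s - c 0) := by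
    have := (hasSum_nat_add_iff' (f := fun n : ℕ => c n * s ^ n) 1).mpr h1
    simpa using this
  have h4 := h3.div_const s
  refine h4.congr_fun fun n => ?_
  field_simp [pow_succ]
  ring

private lemma hasSum_deriv {c : ℕ → ℂ} {h : ℂ → ℂ}
    (hs : ∀ᶠ s in 𝓝[≠] (0:ℂ), HasSum (fun n : ℕ => c n * s ^ n) (h s)) :
    ∀ᶠ s in 𝓝[≠] (0:ℂ),
      HasSum (fun n : ℕ => ((n : ℂ) + 1) * c (n + 1) * s ^ n) (deriv h s) := by
  have hr := radius_pos_of_hasSum hs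
  set p := ofScalars ℂ c with hpdef
  have hp := p.hasFPowerSeriesOnBall hr
  have hd := hp.fderiv
  -- eventual equality on an open set, to transfer `deriv`
  obtain ⟨U, hUo, hU0, hUsub⟩ := mem_nhdsWithin.mp (eventually_eq_sum hs)
  have hball : ∀ᶠ s in 𝓝[≠] (0:ℂ), s ∈ Metric.eball (0:ℂ) p.radius :=
    eventually_nhdsWithin_of_eventually_nhds (EMetric.ball_mem_nhds 0 hr)
  have hUmem : ∀ᶠ s in 𝓝[≠] (0:ℂ), s ∈ U :=
    eventually_nhdsWithin_of_eventually_nhds (hUo.mem_nhds hU0)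
  filter_upwards [hball, hUmem, self_mem_nhdsWithin] with s hsball hsU (hsne : s ≠ 0)
  -- deriv h s = deriv p.sum s
  have hderiv_eq : deriv h s = deriv p.sum s := by
    have hmem : s ∈ U ∩ {(0:ℂ)}ᶜ := ⟨hsU, hsne⟩
    have hopen : IsOpen (U ∩ {(0:ℂ)}ᶜ) := hUo.inter isOpen_compl_singleton
    have heq : h =ᶠ[nhds s] p.sum := by
      filter_upwards [hopen.mem_nhds hmem] with x hx
      exact (hUsub hx).symm
    exact heq.deriv_eq ▸ rfl
  have hsum := hd.hasSum (y := s) (by simpa using hsball)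
  have hsum2 := (ContinuousLinearMap.apply ℂ ℂ s).hasSum hsum
  rw [zero_add] at hsum2
  have hval : fderiv ℂ p.sum s s = s * deriv p.sum s := by
    rw [← fderiv_apply_one_eq_deriv, ← smul_eq_mul, ← map_smul, smul_eq_mul, mul_one]
  have hsum3 := hsum2.div_const s
  simp only [ContinuousLinearMap.apply_apply] at hsum3
  rw [hval, mul_div_cancel_left₀ _ hsne] at hsum3
  rw [hderiv_eq]
  refine hsum3.congr_fun fun n => ?_
  rw [p.derivSeries_apply_diag, hpdef, ofScalars_apply_eq]
  push_cast
  field_simp [pow_succ]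
  ring

private lemma coeffs_relation {c e : ℕ → ℂ} {f g d : ℂ → ℂ}
    (hf : ∀ᶠ s in 𝓝[≠] (0:ℂ), HasSum (fun n : ℕ => c n * s ^ n) (f s))
    (hg : ∀ᶠ s in 𝓝[≠] (0:ℂ), HasSum (fun n : ℕ => e n * s ^ n) (g s))
    (hd : ∀ᶠ s in 𝓝[≠] (0:ℂ), HasSum (fun n : ℕ => ((n : ℂ) + 1) * c (n + 1) * s ^ n) (d s))
    (hrel : ∀ᶠ s in 𝓝[≠] (0:ℂ), g s = -(s * (g s * f s) + f s + s * d s)) :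
    e 2 = -(c 0 ^ 3) + 3 * c 0 * c 1 - 3 * c 2 := by
  haveI : (𝓝[≠] (0:ℂ)).NeBot := NormedField.nhdsNE_neBot (0:ℂ)
  have hsne : ∀ᶠ s in 𝓝[≠] (0:ℂ), s ≠ 0 := self_mem_nhdsWithin
  have Lf := tendsto_coeff_zero hf
  have Lf1 := tendsto_coeff_zero (hasSum_shift hf)
  have Lf2 := tendsto_coeff_zero (hasSum_shift (hasSum_shift hf))
  have Lg := tendsto_coeff_zero hg
  have Lg1 := tendsto_coeff_zero (hasSum_shift hg)
  have Lg2 := tendsto_coeff_zero (hasSum_shift (hasSum_shift hg))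
  have Ld := tendsto_coeff_zero hd
  have Ld1 := tendsto_coeff_zero (hasSum_shift hd)
  norm_num at Lf1 Lf2 Lg1 Lg2 Ld Ld1
  have hid : Tendsto (fun s : ℂ => s) (𝓝[≠] (0:ℂ)) (𝓝 0) :=
    tendsto_id.mono_left nhdsWithin_le_nhds
  -- step 0
  have T0 := (((hid.mul (Lg.mul Lf)).add Lf).add (hid.mul Ld)).neg
  have E0 : e 0 = -c 0 := by
    have := tendsto_nhds_unique (Lg.congr' hrel) T0
    simpa using this
  -- step 1
  have hrel1 : ∀ᶠ s in 𝓝[≠] (0:ℂ),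
      (g s - e 0) / s = -(g s * f s + (f s - c 0) / s + d s) := by
    filter_upwards [hrel, hsne] with s h1 h2
    rw [E0]
    field_simp
    linear_combination h1
  have T1 := (((Lg.mul Lf).add Lf1).add Ld).neg
  have E1 : e 1 = c 0 ^ 2 - 2 * c 1 := by
    have := tendsto_nhds_unique (Lg1.congr' hrel1) T1
    rw [this, E0]; ring
  -- step 2
  have hrel2 : ∀ᶠ s in 𝓝[≠] (0:ℂ),
      ((g s - e 0) / s - e 1) / s =
        -(((g s - e 0) / s) * f s + e 0 * ((f s - c 0) / s)
          + ((f s - c 0) / s - c 1) / s + (d s - c 1) / s) := by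
    filter_upwards [hrel, hsne] with s h1 h2
    rw [E0, E1]
    field_simp
    linear_combination h1
  have T2 := ((((Lg1.mul Lf).add ((tendsto_const_nhds (x := e 0)).mul Lf1)).add Lf2).add Ld1).neg
  have E2 := tendsto_nhds_unique (Lg2.congr' hrel2) T2
  rw [E2, E0, E1]; ring

/-- with `ζ(s+1) = 1/s + Σ γ_n s^n` and `-ζ'(s+1)/ζ(s+1) = 1/s + Σ η_n s^n`
near `s = 0`, one has `η_2 = −γ_0³ + 3γ_0γ_1 − 3γ_2`. -/
theorem eta_two_eq (γ η : ℕ → ℂ)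
    (hγ : ∀ᶠ s in nhdsWithin (0 : ℂ) {0}ᶜ,
      HasSum (fun n : ℕ => γ n * s ^ n) (riemannZeta (s + 1) - 1 / s))
    (hη : ∀ᶠ s in nhdsWithin (0 : ℂ) {0}ᶜ,
      HasSum (fun n : ℕ => η n * s ^ n)
        (-(deriv riemannZeta (s + 1) / riemannZeta (s + 1)) - 1 / s)) :
    η 2 = -(γ 0 ^ 3) + 3 * γ 0 * γ 1 - 3 * γ 2 := by
  haveI : (𝓝[≠] (0:ℂ)).NeBot := NormedField.nhdsNE_neBot (0:ℂ)
  have hsne : ∀ᶠ s in 𝓝[≠] (0:ℂ), s ≠ 0 := self_mem_nhdsWithin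
  have hd := hasSum_deriv hγ
  -- the derivative formula
  have hdf : ∀ᶠ s in 𝓝[≠] (0:ℂ),
      deriv (fun z : ℂ => riemannZeta (z + 1) - 1 / z) s
        = deriv riemannZeta (s + 1) + 1 / s ^ 2 := by
    filter_upwards [hsne] with s hs
    have hz : DifferentiableAt ℂ (fun z : ℂ => riemannZeta (z + 1)) s := by
      have h1 : s + 1 ≠ 1 := by
        intro h; apply hs; linear_combination h
      exact (differentiableAt_riemannZeta h1).comp s
        ((differentiableAt_id).add_const 1)
    have hinv : DifferentiableAt ℂ (fun z : ℂ => 1 / z) s := by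
      simpa [one_div] using (differentiableAt_inv hs)
    rw [deriv_fun_sub hz hinv]
    have h2 : deriv (fun z : ℂ => riemannZeta (z + 1)) s = deriv riemannZeta (s + 1) :=
      deriv_comp_add_const _ _ _
    have h3 : deriv (fun z : ℂ => 1 / z) s = -(s ^ 2)⁻¹ := by
      simpa [one_div] using deriv_inv (x := s)
    rw [h2, h3]
    ring
  -- zeta is nonzero near 0
  have hζne : ∀ᶠ s in 𝓝[≠] (0:ℂ), riemannZeta (s + 1) ≠ 0 := by
    have Lf := tendsto_coeff_zero hγ
    have hid : Tendsto (fun s : ℂ => s) (𝓝[≠] (0:ℂ)) (𝓝 0) :=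
      tendsto_id.mono_left nhdsWithin_le_nhds
    have h1 : Tendsto (fun s : ℂ => s * (riemannZeta (s + 1) - 1 / s) + 1)
        (𝓝[≠] (0:ℂ)) (𝓝 (0 * γ 0 + 1)) := (hid.mul Lf).add tendsto_const_nhds
    have h2 : ∀ᶠ s in 𝓝[≠] (0:ℂ), s * (riemannZeta (s + 1) - 1 / s) + 1 ≠ 0 :=
      h1.eventually_ne (by norm_num)
    filter_upwards [h2, hsne] with s h3 h4
    intro h5
    apply h3
    rw [h5]
    field_simp
    ring
  -- the key relation
  have hrel : ∀ᶠ s in 𝓝[≠] (0:ℂ),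
      (-(deriv riemannZeta (s + 1) / riemannZeta (s + 1)) - 1 / s)
        = -(s * ((-(deriv riemannZeta (s + 1) / riemannZeta (s + 1)) - 1 / s)
            * (riemannZeta (s + 1) - 1 / s))
          + (riemannZeta (s + 1) - 1 / s)
          + s * (deriv (fun z : ℂ => riemannZeta (z + 1) - 1 / z) s)) := by
    filter_upwards [hdf, hζne, hsne] with s h1 h2 h3
    rw [h1]
    field_simp
    ring
  exact coeffs_relation hγ hη hd hrel
end

section
/- With η_n and γ_n the Laurent expansion coefficients of −ζ'/ζ and ζ at s=1, one has η_3 = γ_0^4 − 4γ_0^2γ_1 + 2γ_1^2 + 4γ_0γ_2 − 4γ_3. -/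
open Filter Complex Finset
open scoped Topology ENNReal NNReal

private lemma aux_radius {c : ℕ → ℂ} {s : ℂ} (hs : s ≠ 0)
    (h : Summable fun n => c n * s ^ n) :
    0 < (FormalMultilinearSeries.ofScalars ℂ c).radius := by
  have h0 : Filter.Tendsto (fun n => ‖c n * s ^ n‖) atTop (nhds 0) := by
    simpa using h.tendsto_atTop_zero.norm
  have h1 : Filter.Tendsto
      (fun n => ‖(FormalMultilinearSeries.ofScalars ℂ c) n‖ * (‖s‖₊ : ℝ) ^ n) atTop (nhds 0) := by
    simp only [FormalMultilinearSeries.ofScalars_norm]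
    simpa [norm_mul, norm_pow] using h0
  have hle := (FormalMultilinearSeries.ofScalars ℂ c).le_radius_of_tendsto h1
  refine lt_of_lt_of_le ?_ hle
  simpa using (nnnorm_pos.mpr hs)

private lemma aux_hasSum {c : ℕ → ℂ} {s : ℂ}
    (hs : (‖s‖₊ : ℝ≥0∞) < (FormalMultilinearSeries.ofScalars ℂ c).radius) :
    HasSum (fun n => c n * s ^ n) ((FormalMultilinearSeries.ofScalars ℂ c).sum s) := by
  have hball : s ∈ Metric.eball (0:ℂ) (FormalMultilinearSeries.ofScalars ℂ c).radius := by
    rwa [EMetric.mem_ball, edist_zero_right]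
  have := (FormalMultilinearSeries.ofScalars ℂ c).hasSum hball
  simp only [FormalMultilinearSeries.ofScalars_apply_eq, smul_eq_mul] at this
  exact this

private lemma aux_summable_norm {c : ℕ → ℂ} {s : ℂ}
    (hs : (‖s‖₊ : ℝ≥0∞) < (FormalMultilinearSeries.ofScalars ℂ c).radius) :
    Summable (fun n => ‖c n * s ^ n‖) := by
  have := (FormalMultilinearSeries.ofScalars ℂ c).summable_norm_mul_pow hs
  simp only [FormalMultilinearSeries.ofScalars_norm] at this
  simpa [norm_mul, norm_pow] using this

/-- with `ζ(s+1) = 1/s + Σ γ_n s^n` and `-ζ'(s+1)/ζ(s+1) = 1/s + Σ η_n s^n`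
near `s = 0`, one has `η_3 = γ_0⁴ − 4γ_0²γ_1 + 2γ_1² + 4γ_0γ_2 − 4γ_3`. -/
theorem eta_three_eq (γ η : ℕ → ℂ)
    (hγ : ∀ᶠ s in nhdsWithin (0 : ℂ) {0}ᶜ,
      HasSum (fun n : ℕ => γ n * s ^ n) (riemannZeta (s + 1) - 1 / s))
    (hη : ∀ᶠ s in nhdsWithin (0 : ℂ) {0}ᶜ,
      HasSum (fun n : ℕ => η n * s ^ n)
        (-(deriv riemannZeta (s + 1) / riemannZeta (s + 1)) - 1 / s)) :
    η 3 = γ 0 ^ 4 - 4 * γ 0 ^ 2 * γ 1 + 2 * γ 1 ^ 2 + 4 * γ 0 * γ 2 - 4 * γ 3 := by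
  classical
  set pg : FormalMultilinearSeries ℂ ℂ ℂ := FormalMultilinearSeries.ofScalars ℂ γ with hpg
  set ph : FormalMultilinearSeries ℂ ℂ ℂ := FormalMultilinearSeries.ofScalars ℂ η with hph
  set g : ℂ → ℂ := pg.sum with hgdef
  set h : ℂ → ℂ := ph.sum with hhdef
  -- zeta is nonvanishing near 0
  have hz0 : ∀ᶠ s in nhdsWithin (0 : ℂ) {0}ᶜ, riemannZeta (s + 1) ≠ 0 := by
    have h1 : Tendsto (fun s : ℂ => s + 1) (nhdsWithin (0:ℂ) {0}ᶜ) (nhdsWithin (1:ℂ) {1}ᶜ) := by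
      apply tendsto_nhdsWithin_of_tendsto_nhds_of_eventually_within
      · simpa using ((continuous_add_right (1:ℂ)).tendsto (0:ℂ)).mono_left
          nhdsWithin_le_nhds
      · filter_upwards [self_mem_nhdsWithin] with t ht
        simp only [Set.mem_compl_iff, Set.mem_singleton_iff] at ht ⊢
        intro hcon; exact ht (by linear_combination hcon)
    have hzt : Tendsto (fun s : ℂ => s * riemannZeta (s + 1)) (nhdsWithin (0:ℂ) {0}ᶜ)
        (nhds 1) := by
      have := riemannZeta_residue_one.comp h1
      simpa [Function.comp_def, add_sub_cancel_right] using this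
    filter_upwards [hzt.eventually_ne one_ne_zero] with s hs
    intro hcon; exact hs (by simp [hcon])
  -- a sample point giving positive radii
  obtain ⟨s₁, hs₁γ, hs₁η, hs₁ne⟩ := (hγ.and (hη.and eventually_mem_nhdsWithin)).exists
  rw [Set.mem_compl_iff, Set.mem_singleton_iff] at hs₁ne
  have hrg : 0 < pg.radius := aux_radius hs₁ne hs₁γ.summable
  have hrh : 0 < ph.radius := aux_radius hs₁ne hs₁η.summable
  obtain ⟨ρ, hρpos, hρ⟩ : ∃ ρ : ℝ≥0, 0 < ρ ∧ (ρ : ℝ≥0∞) < min pg.radius ph.radius := by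
    obtain ⟨ρ, h1, h2⟩ := ENNReal.lt_iff_exists_nnreal_btwn.mp (lt_min hrg hrh)
    exact ⟨ρ, by simpa using h1, h2⟩
  -- a uniform small scale
  obtain ⟨ε, hε0, hεP⟩ : ∃ ε > 0, ∀ s : ℂ, s ≠ 0 → dist s 0 < ε →
      HasSum (fun n : ℕ => γ n * s ^ n) (riemannZeta (s + 1) - 1 / s) ∧
      HasSum (fun n : ℕ => η n * s ^ n)
        (-(deriv riemannZeta (s + 1) / riemannZeta (s + 1)) - 1 / s) ∧
      riemannZeta (s + 1) ≠ 0 := by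
    have hev := hγ.and (hη.and hz0)
    rw [Filter.Eventually, Metric.mem_nhdsWithin_iff] at hev
    obtain ⟨ε, hε0, hsub⟩ := hev
    exact ⟨ε, hε0, fun s hs hd => hsub ⟨Metric.mem_ball.mpr hd, by simpa using hs⟩⟩
  set R : ℝ := min ε ρ with hRdef
  have hR0 : 0 < R := lt_min hε0 (by exact_mod_cast hρpos)
  have hRρ : R ≤ (ρ : ℝ) := min_le_right _ _
  have hRε : R ≤ ε := min_le_left _ _
  -- radius bounds for points in the R-ball
  have hmemg : ∀ s : ℂ, ‖s‖ < R → (‖s‖₊ : ℝ≥0∞) < pg.radius := by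
    intro s hsR
    have h1 : (‖s‖₊ : ℝ≥0∞) < (ρ : ℝ≥0∞) := by
      rw [ENNReal.coe_lt_coe, ← NNReal.coe_lt_coe]
      simpa using lt_of_lt_of_le hsR hRρ
    exact h1.trans (hρ.trans_le (min_le_left _ _))
  have hmemh : ∀ s : ℂ, ‖s‖ < R → (‖s‖₊ : ℝ≥0∞) < ph.radius := by
    intro s hsR
    have h1 : (‖s‖₊ : ℝ≥0∞) < (ρ : ℝ≥0∞) := by
      rw [ENNReal.coe_lt_coe, ← NNReal.coe_lt_coe]
      simpa using lt_of_lt_of_le hsR hRρ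
    exact h1.trans (hρ.trans_le (min_le_right _ _))
  -- identification of g and h on the punctured ball
  have hgs : ∀ s : ℂ, s ≠ 0 → ‖s‖ < R → riemannZeta (s + 1) = 1 / s + g s := by
    intro s hs hsR
    have h1 : HasSum (fun n => γ n * s ^ n) (g s) := aux_hasSum (hmemg s hsR)
    have h2 := (hεP s hs (by simpa using lt_of_lt_of_le hsR hRε)).1
    have := h1.unique h2
    rw [this]; ring
  have hhs : ∀ s : ℂ, s ≠ 0 → ‖s‖ < R →
      -(deriv riemannZeta (s + 1) / riemannZeta (s + 1)) - 1 / s = h s := by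
    intro s hs hsR
    have h1 : HasSum (fun n => η n * s ^ n) (h s) := aux_hasSum (hmemh s hsR)
    have h2 := (hεP s hs (by simpa using lt_of_lt_of_le hsR hRε)).2.1
    exact (h1.unique h2).symm
  -- local series objects
  set d : ℕ → ℂ := fun n => ∑ kl ∈ Finset.HasAntidiagonal.antidiagonal n, η kl.1 * γ kl.2 with hddef
  set c : ℕ → ℂ := fun n =>
    match n with
    | 0 => η 0 + γ 0
    | (m+1) => ((m:ℂ)+1) * γ (m+1) + η (m+1) + γ (m+1) + d m
    with hcdef
  have hball := pg.hasFPowerSeriesOnBall hrg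
  have hfd := hball.fderiv
  have hopen : IsOpen {t : ℂ | t ≠ 0 ∧ ‖t‖ < R} := by
    have h0 : {t : ℂ | t ≠ 0 ∧ ‖t‖ < R} = {(0:ℂ)}ᶜ ∩ {t : ℂ | ‖t‖ < R} := by
      ext t; simp [Set.mem_compl_iff]
    rw [h0]
    exact isOpen_compl_singleton.inter (isOpen_lt continuous_norm continuous_const)
  have key : ∀ s : ℂ, s ≠ 0 → ‖s‖ < R → HasSum (fun n => c n * s ^ n) 0 := by
    intro s hs hsR
    have hGs : HasSum (fun n => γ n * s ^ n) (g s) := aux_hasSum (hmemg s hsR)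
    have hHs : HasSum (fun n => η n * s ^ n) (h s) := aux_hasSum (hmemh s hsR)
    have hdg : DifferentiableAt ℂ g s :=
      (hball.analyticAt_of_mem (by
        rw [EMetric.mem_ball, edist_zero_right]; exact hmemg s hsR)).differentiableAt
    -- derivative of zeta in terms of deriv g
    have hev_eq : (fun t => riemannZeta (t + 1)) =ᶠ[nhds s] (fun t => 1/t + g t) := by
      filter_upwards [hopen.mem_nhds ⟨hs, hsR⟩] with t ht
      exact hgs t ht.1 ht.2
    have hderiv_eq := hev_eq.deriv_eq
    rw [deriv_comp_add_const] at hderiv_eq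
    have hd1 : HasDerivAt (fun t : ℂ => 1/t) (-(1/s^2)) s := by
      simpa [one_div] using (hasDerivAt_inv hs)
    have hζ' : deriv riemannZeta (s + 1) = deriv g s - 1/s^2 := by
      rw [hderiv_eq, deriv_fun_add hd1.differentiableAt hdg, hd1.deriv]
      ring
    -- the logarithmic-derivative identity
    have hlog := hhs s hs hsR
    have hZne := (hεP s hs (by simpa using lt_of_lt_of_le hsR hRε)).2.2
    have hdiv : deriv riemannZeta (s + 1) / riemannZeta (s + 1) = -(h s) - 1/s := by
      linear_combination -hlog
    have hZ' : deriv riemannZeta (s+1) = (-(h s) - 1/s) * riemannZeta (s+1) :=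
      (div_eq_iff hZne).mp hdiv
    have e : deriv g s - 1/s^2 = (-(h s) - 1/s) * (1/s + g s) := by
      rw [← hζ', hZ', hgs s hs hsR]
    have hsu : s * (1/s) = 1 := by field_simp
    have hmain : s * deriv g s + (h s + g s) + s * (h s * g s) = 0 := by
      linear_combination s * e - (h s + g s) * hsu
    -- HasSum for s * deriv g s
    have hfds : HasSum (fun n => pg.derivSeries n (fun _ => s)) (fderiv ℂ g (0 + s)) :=
      hfd.hasSum (by rw [EMetric.mem_ball, edist_zero_right]; exact hmemg s hsR)
    have hA : HasSum (fun n : ℕ => ((n : ℂ) + 1) * γ (n+1) * s ^ (n+1)) (s * deriv g s) := by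
      have h1 := hfds.mapL (ContinuousLinearMap.apply ℂ ℂ s)
      simp only [ContinuousLinearMap.apply_apply] at h1
      have h2 : ∀ n : ℕ, pg.derivSeries n (fun _ => s) s
          = ((n:ℂ)+1) * γ (n+1) * s ^ (n+1) := by
        intro n
        rw [pg.derivSeries_apply_diag, hpg, FormalMultilinearSeries.ofScalars_apply_eq]
        push_cast [nsmul_eq_mul, smul_eq_mul]
        ring
      have h3 : fderiv ℂ g (0 + s) s = s * deriv g s := by
        rw [zero_add]
        have h5 : fderiv ℂ g s s = s • (fderiv ℂ g s) 1 := by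
          rw [← (fderiv ℂ g s).map_smul]
          congr 1
          simp
        rw [h5, fderiv_apply_one_eq_deriv, smul_eq_mul]
      simp only [h2, h3] at h1
      exact h1
    -- Cauchy product
    have hnγ : Summable fun n => ‖γ n * s^n‖ := aux_summable_norm (hmemg s hsR)
    have hnη : Summable fun n => ‖η n * s^n‖ := aux_summable_norm (hmemh s hsR)
    have hDsum : HasSum (fun n => ∑ kl ∈ Finset.HasAntidiagonal.antidiagonal n,
        (η kl.1 * s ^ kl.1) * (γ kl.2 * s ^ kl.2)) (h s * g s) := by
      have hsumm := (summable_norm_sum_mul_antidiagonal_of_summable_norm hnη hnγ).of_norm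
      have h4 := hsumm.hasSum
      rwa [← tsum_mul_tsum_eq_tsum_sum_antidiagonal_of_summable_norm hnη hnγ,
        hHs.tsum_eq, hGs.tsum_eq] at h4
    have hD : HasSum (fun n => d n * s ^ (n+1)) (s * (h s * g s)) := by
      have h5 := hDsum.mul_left s
      have h6 : (fun n => s * ∑ kl ∈ Finset.HasAntidiagonal.antidiagonal n,
          (η kl.1 * s ^ kl.1) * (γ kl.2 * s ^ kl.2)) = fun n => d n * s ^ (n+1) := by
        funext n
        simp only [hddef, Finset.sum_mul, Finset.mul_sum]
        apply Finset.sum_congr rfl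
        intro kl hkl
        have hkl' := Finset.HasAntidiagonal.mem_antidiagonal.mp hkl
        rw [← hkl', pow_add]
        ring
      rwa [h6] at h5
    have hAD := hA.add hD
    have hF : HasSum (fun n => c n * s ^ n - (η n * s ^ n + γ n * s ^ n))
        (s * deriv g s + s * (h s * g s)) := by
      apply (hasSum_nat_add_iff' 1).mp
      convert hAD using 1
      · rfl
      · funext n
        simp only [hcdef]
        ring
      · simp [hcdef]
    have hFinal := hF.add (hHs.add hGs)
    have h9 : (fun n => (c n * s^n - (η n * s^n + γ n * s^n)) + (η n * s^n + γ n * s^n))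
        = fun n => c n * s^n := by funext n; ring
    have h10 : (s * deriv g s + s * (h s * g s)) + (h s + g s) = 0 := by
      linear_combination hmain
    rw [h9, h10] at hFinal
    exact hFinal
  -- the coefficient series vanishes identically
  set pc : FormalMultilinearSeries ℂ ℂ ℂ := FormalMultilinearSeries.ofScalars ℂ c with hpc
  have hR2 : (0:ℝ) < R/2 := by linarith
  have hs2ne : ((R/2 : ℝ) : ℂ) ≠ 0 := by
    simp only [ne_eq, Complex.ofReal_eq_zero]
    exact hR2.ne'
  have hs2R : ‖((R/2 : ℝ) : ℂ)‖ < R := by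
    rw [Complex.norm_real, Real.norm_eq_abs, abs_of_pos hR2]
    linarith
  have hrc : 0 < pc.radius := aux_radius hs2ne (key _ hs2ne hs2R).summable
  have hcball := pc.hasFPowerSeriesOnBall hrc
  have hsum_eq : ∀ s : ℂ, s ≠ 0 → ‖s‖ < R → pc.sum s = 0 := by
    intro s h1 h2
    have h3 : pc.sum s = ∑' n, c n * s ^ n := by
      rw [FormalMultilinearSeries.sum]
      apply tsum_congr
      intro n
      rw [hpc, FormalMultilinearSeries.ofScalars_apply_eq, smul_eq_mul]
    rw [h3, (key s h1 h2).tsum_eq]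
  have hev : ∀ᶠ t in nhdsWithin (0:ℂ) {0}ᶜ, pc.sum t = 0 := by
    rw [Filter.Eventually, Metric.mem_nhdsWithin_iff]
    refine ⟨R, hR0, fun t ht => ?_⟩
    exact hsum_eq t (by simpa using ht.2) (by simpa [Metric.mem_ball] using ht.1)
  have h00 : pc.sum 0 = 0 := by
    have hc0 : ContinuousAt pc.sum 0 := hcball.hasFPowerSeriesAt.continuousAt
    have t1 : Tendsto pc.sum (nhdsWithin (0:ℂ) {0}ᶜ) (nhds (pc.sum 0)) :=
      hc0.tendsto.mono_left nhdsWithin_le_nhds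
    have t2 : Tendsto pc.sum (nhdsWithin (0:ℂ) {0}ᶜ) (nhds 0) :=
      Tendsto.congr' (hev.mono fun t ht => ht.symm) tendsto_const_nhds
    exact tendsto_nhds_unique t1 t2
  have heq : pc.sum =ᶠ[nhds (0:ℂ)] 0 := by
    rw [Filter.EventuallyEq, ← nhdsNE_sup_pure (0:ℂ),
      Filter.eventually_sup]
    constructor
    · exact hev.mono (by intro t ht; simpa using ht)
    · simpa using h00
  have hpc0 : pc = 0 := (hcball.hasFPowerSeriesAt.congr heq).eq_zero
  have hcz : ∀ n, c n = 0 := by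
    intro n
    have h1 : pc n = 0 := by rw [hpc0]; rfl
    rw [hpc] at h1
    exact (FormalMultilinearSeries.ofScalars_eq_zero ℂ n).mp h1
  -- extract the first four coefficient equations
  have hd0 : d 0 = η 0 * γ 0 := by simp [hddef]
  have hd1 : d 1 = η 0 * γ 1 + η 1 * γ 0 := by
    simp [hddef, Finset.Nat.sum_antidiagonal_eq_sum_range_succ_mk, Finset.sum_range_succ]
  have hd2 : d 2 = η 0 * γ 2 + η 1 * γ 1 + η 2 * γ 0 := by
    simp [hddef, Finset.Nat.sum_antidiagonal_eq_sum_range_succ_mk, Finset.sum_range_succ]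
  have e0 : η 0 + γ 0 = 0 := hcz 0
  have e1 : (((0:ℕ):ℂ)+1) * γ 1 + η 1 + γ 1 + d 0 = 0 := hcz 1
  have e2 : (((1:ℕ):ℂ)+1) * γ 2 + η 2 + γ 2 + d 1 = 0 := hcz 2
  have e3 : (((2:ℕ):ℂ)+1) * γ 3 + η 3 + γ 3 + d 2 = 0 := hcz 3
  rw [hd0] at e1
  rw [hd1] at e2
  rw [hd2] at e3
  push_cast at e1 e2 e3
  linear_combination e3 - γ 0 * e2 + (γ 0^2 - γ 1) * e1 + (2*γ 0*γ 1 - γ 2 - γ 0^3) * e0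
end

section
/- The oscillating part λ̃_n := (1/Γ(n)) d^n/ds^n [s^{n-1} log((s−1)ζ(s))]|_{s=1} satisfies λ̃_n = −Σ_{j=1}^{n} C(n,j) η_{j−1}, where η_m are the Laurent coefficients of −ζ'(s+1)/ζ(s+1) = 1/s + Σ η_m s^m. -/
open Filter Complex Finset

open Topology

/-- The oscillating part of the Li coefficients:
`λ̃_n = (1/Γ(n)) dⁿ/dsⁿ [s^(n-1) log((s−1)ζ(s))]` at `s = 1`. -/
noncomputable def liOsc (n : ℕ) : ℂ :=
  (1 / Complex.Gamma n) *
    iteratedDeriv n (fun s : ℂ => s ^ (n - 1) * Complex.log ((s - 1) * riemannZeta s)) 1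



private lemma itD_within_eq {f : ℂ → ℂ} {s : Set ℂ} (hs : IsOpen s) {x : ℂ} (hx : x ∈ s) (n : ℕ) :
    iteratedDerivWithin n f s x = iteratedDeriv n f x := by
  rw [iteratedDerivWithin_eq_iteratedFDerivWithin, iteratedDeriv_eq_iteratedFDeriv,
    iteratedFDerivWithin_of_isOpen n hs hx]

private lemma iteratedDeriv_add_analytic {f g : ℂ → ℂ} {x : ℂ} (hf : AnalyticAt ℂ f x)
    (hg : AnalyticAt ℂ g x) (n : ℕ) :
    iteratedDeriv n (fun z => f z + g z) x = iteratedDeriv n f x + iteratedDeriv n g x := by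
  obtain ⟨ε, hε, hball⟩ := Metric.eventually_nhds_iff.mp
    (hf.eventually_analyticAt.and hg.eventually_analyticAt)
  have hxball : x ∈ Metric.ball x ε := Metric.mem_ball_self hε
  have hu : UniqueDiffOn ℂ (Metric.ball x ε) := Metric.isOpen_ball.uniqueDiffOn
  have hf' : ContDiffOn ℂ n f (Metric.ball x ε) :=
    fun y hy => ((hball (Metric.mem_ball.mp hy)).1.contDiffAt).contDiffWithinAt
  have hg' : ContDiffOn ℂ n g (Metric.ball x ε) :=
    fun y hy => ((hball (Metric.mem_ball.mp hy)).2.contDiffAt).contDiffWithinAt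
  rw [← itD_within_eq Metric.isOpen_ball hxball n, ← itD_within_eq Metric.isOpen_ball hxball n,
    ← itD_within_eq Metric.isOpen_ball hxball n]
  exact iteratedDerivWithin_add hxball hu (hf' x hxball) (hg' x hxball)

private lemma iteratedDeriv_const_mul_analytic {f : ℂ → ℂ} {x : ℂ} (hf : AnalyticAt ℂ f x)
    (c : ℂ) (n : ℕ) :
    iteratedDeriv n (fun z => c * f z) x = c * iteratedDeriv n f x := by
  obtain ⟨ε, hε, hball⟩ := Metric.eventually_nhds_iff.mp hf.eventually_analyticAt
  have hxball : x ∈ Metric.ball x ε := Metric.mem_ball_self hε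
  have hu : UniqueDiffOn ℂ (Metric.ball x ε) := Metric.isOpen_ball.uniqueDiffOn
  have hf' : ContDiffOn ℂ n f (Metric.ball x ε) :=
    fun y hy => ((hball (Metric.mem_ball.mp hy)).contDiffAt).contDiffWithinAt
  rw [← itD_within_eq Metric.isOpen_ball hxball n, ← itD_within_eq Metric.isOpen_ball hxball n]
  exact iteratedDerivWithin_const_mul hxball hu c (hf' x hxball)

private lemma iteratedDeriv_sum_analytic {ι : Type} (s : Finset ι) (F : ι → ℂ → ℂ) (x : ℂ)
    (hF : ∀ i ∈ s, AnalyticAt ℂ (F i) x) (n : ℕ) :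
    iteratedDeriv n (fun t => ∑ i ∈ s, F i t) x = ∑ i ∈ s, iteratedDeriv n (F i) x := by
  classical
  induction s using Finset.induction with
  | empty => simp [iteratedDeriv_eq_iteratedFDeriv]
  | insert _ _ hnotmem ih =>
    rename_i a s'
    simp only [Finset.sum_insert hnotmem]
    rw [iteratedDeriv_add_analytic (hF a (Finset.mem_insert_self a s'))
      (Finset.analyticAt_fun_sum _ (fun i hi => hF i (Finset.mem_insert_of_mem hi))) n,
      ih (fun i hi => hF i (Finset.mem_insert_of_mem hi))]

private lemma aderiv {f : ℂ → ℂ} {x : ℂ} (hf : AnalyticAt ℂ f x) : AnalyticAt ℂ (deriv f) x := by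
  obtain ⟨ε, hε, hball⟩ := Metric.eventually_nhds_iff.mp hf.eventually_analyticAt
  have : AnalyticOnNhd ℂ f (Metric.ball x ε) := fun y hy => hball (Metric.mem_ball.mp hy)
  exact this.deriv x (Metric.mem_ball_self hε)

private lemma iteratedDeriv_id_mul {f : ℂ → ℂ} (hf : AnalyticAt ℂ f 0) (N : ℕ) :
    iteratedDeriv (N + 1) (fun t => t * f t) 0 = (N + 1 : ℂ) * iteratedDeriv N f 0 := by
  induction N generalizing f with
  | zero =>
    rw [iteratedDeriv_one]
    have hd : deriv (fun t : ℂ => t * f t) 0 = f 0 := by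
      rw [deriv_fun_mul differentiableAt_fun_id hf.differentiableAt]; simp
    simp [hd]
  | succ N ih =>
    have hf' : AnalyticAt ℂ (deriv f) 0 := aderiv hf
    have hid : AnalyticAt ℂ (fun t : ℂ => t) 0 := analyticAt_id
    have hev : (deriv fun t : ℂ => t * f t) =ᶠ[𝓝 (0:ℂ)] fun t => f t + t * deriv f t := by
      filter_upwards [hf.eventually_analyticAt] with t ht
      rw [deriv_fun_mul differentiableAt_fun_id ht.differentiableAt]; simp
    rw [iteratedDeriv_succ', hev.iteratedDeriv_eq (N + 1),
      iteratedDeriv_add_analytic hf ((hid.fun_mul hf')) (N + 1), ih hf',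
      ← iteratedDeriv_succ']
    push_cast
    ring

private lemma iteratedDeriv_pow_mul {f : ℂ → ℂ} (hf : AnalyticAt ℂ f 0) :
    ∀ i N, i ≤ N → iteratedDeriv N (fun t => t ^ i * f t) 0
      = (N.descFactorial i : ℂ) * iteratedDeriv (N - i) f 0 := by
  intro i
  induction i generalizing f with
  | zero => intro N _; simp
  | succ i ih =>
    intro N hN
    obtain ⟨N, rfl⟩ : ∃ M, N = M + 1 := ⟨N - 1, by omega⟩
    have heq : (fun t : ℂ => t ^ (i + 1) * f t) = fun t => t * (t ^ i * f t) := by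
      funext t; ring
    have hid : AnalyticAt ℂ (fun t : ℂ => t) 0 := analyticAt_id
    have hg : AnalyticAt ℂ (fun t : ℂ => t ^ i * f t) 0 := (hid.pow i).mul hf
    rw [heq, iteratedDeriv_id_mul hg N, ih hf N (by omega), Nat.succ_descFactorial_succ,
      Nat.succ_sub_succ]
    push_cast
    ring

/-- with `η_m` the Laurent coefficients of
`-ζ'(s+1)/ζ(s+1) = 1/s + Σ η_m s^m` near `0`, for every `n ≥ 1`,
`λ̃_n = −Σ_{j=1}^n C(n,j) η_{j−1}`. -/
theorem liOsc_eq (η : ℕ → ℂ)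
    (hη : ∀ᶠ s in nhdsWithin (0 : ℂ) {0}ᶜ,
      HasSum (fun m : ℕ => η m * s ^ m)
        (-(deriv riemannZeta (s + 1) / riemannZeta (s + 1)) - 1 / s))
    (n : ℕ) (hn : 1 ≤ n) :
    liOsc n = -∑ j ∈ Finset.Icc 1 n, (n.choose j : ℂ) * η (j - 1) := by
  classical
  -- the analytic continuation of `(s-1)ζ(s)`
  set Z : ℂ → ℂ := Function.update (fun s => (s - 1) * riemannZeta s) 1 1 with hZdef
  have hZ1 : Z 1 = 1 := Function.update_self _ _ _
  have hZne : ∀ s : ℂ, s ≠ 1 → Z s = (s - 1) * riemannZeta s :=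
    fun s hs => Function.update_of_ne hs _ _
  have hZa : AnalyticAt ℂ Z 1 := by
    apply Complex.analyticAt_of_differentiable_on_punctured_nhds_of_continuousAt
    · filter_upwards [self_mem_nhdsWithin] with t ht
      have ht' : t ≠ 1 := ht
      have hev : (fun s : ℂ => (s - 1) * riemannZeta s) =ᶠ[𝓝 t] Z := by
        filter_upwards [isOpen_compl_singleton.eventually_mem ht'] with s hs
        exact (hZne s hs).symm
      exact ((differentiableAt_id.sub_const 1).mul
        (differentiableAt_riemannZeta ht')).congr_of_eventuallyEq hev.symm
    · rw [hZdef, continuousAt_update_same]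
      exact riemannZeta_residue_one
  set h : ℂ → ℂ := fun s => Complex.log (Z s) with hhdef
  have hslit : Z 1 ∈ Complex.slitPlane := by rw [hZ1]; exact Complex.one_mem_slitPlane
  have hha : AnalyticAt ℂ h 1 := (analyticAt_clog hslit).comp hZa
  set φ : ℂ → ℂ := fun t => h (1 + t) with hφdef
  have hφa : AnalyticAt ℂ φ 0 := by
    have h1 : AnalyticAt ℂ (fun t : ℂ => 1 + t) 0 := analyticAt_const.add analyticAt_id
    have h2 : AnalyticAt ℂ h ((fun t : ℂ => 1 + t) 0) := by simpa using hha
    exact h2.comp h1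
  -- derivative formula near 1
  have hder : ∀ᶠ s in 𝓝 (1:ℂ), s ≠ 1 →
      deriv h s = 1 / (s - 1) + deriv riemannZeta s / riemannZeta s := by
    have hmem : ∀ᶠ s in 𝓝 (1:ℂ), Z s ∈ Complex.slitPlane :=
      hZa.continuousAt.eventually_mem (Complex.isOpen_slitPlane.mem_nhds hslit)
    filter_upwards [hmem] with s hs1 hne
    have hZs : Z s = (s - 1) * riemannZeta s := hZne s hne
    have hZ0 : Z s ≠ 0 := Complex.slitPlane_ne_zero hs1
    rw [hZs] at hZ0
    have hz0 : riemannZeta s ≠ 0 := fun hc => hZ0 (by rw [hc, mul_zero])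
    have hs10 : s - 1 ≠ 0 := sub_ne_zero.mpr hne
    have hd1 : HasDerivAt (fun w : ℂ => (w - 1) * riemannZeta w)
        (riemannZeta s + (s - 1) * deriv riemannZeta s) s := by
      have h1 : HasDerivAt (fun w : ℂ => w - 1) 1 s := (hasDerivAt_id s).sub_const 1
      have h2 : HasDerivAt riemannZeta (deriv riemannZeta s) s :=
        (differentiableAt_riemannZeta hne).hasDerivAt
      simpa using h1.fun_mul h2
    have hev : (fun w : ℂ => (w - 1) * riemannZeta w) =ᶠ[𝓝 s] Z := by
      filter_upwards [isOpen_compl_singleton.eventually_mem (hne : s ∈ ({1}ᶜ : Set ℂ))] with w hw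
      exact (hZne w hw).symm
    have hZder : HasDerivAt Z (riemannZeta s + (s - 1) * deriv riemannZeta s) s :=
      hd1.congr_of_eventuallyEq hev.symm
    have hlog : HasDerivAt h ((riemannZeta s + (s - 1) * deriv riemannZeta s) / Z s) s :=
      hZder.clog hs1
    rw [hlog.deriv, hZs]
    field_simp
  -- the Laurent hypothesis in terms of `deriv φ`
  have hderφ : ∀ᶠ t in 𝓝[≠] (0:ℂ), HasSum (fun m : ℕ => η m * t ^ m) (-deriv φ t) := by
    have hmap : Tendsto (fun t : ℂ => 1 + t) (𝓝 0) (𝓝 1) := by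
      have : Continuous (fun t : ℂ => 1 + t) := continuous_const.add continuous_id
      simpa using this.tendsto (0 : ℂ)
    have h1 := eventually_nhdsWithin_of_eventually_nhds (s := ({0}ᶜ : Set ℂ)) (hmap.eventually hder)
    filter_upwards [hη, h1, self_mem_nhdsWithin] with t hsum hd ht0
    have ht0' : t ≠ 0 := ht0
    have hne : (1:ℂ) + t ≠ 1 := by
      intro hc; exact ht0' (by linear_combination hc)
    have hφd : deriv φ t = deriv h (1 + t) := deriv_comp_const_add h 1 t
    rw [hφd, hd hne]
    have e1 : (1:ℂ) + t - 1 = t := by ring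
    rw [e1]
    have e2 : -(1 / t + deriv riemannZeta (1 + t) / riemannZeta (1 + t))
        = -(deriv riemannZeta (t + 1) / riemannZeta (t + 1)) - 1 / t := by
      rw [add_comm (1:ℂ) t]; ring
    rw [e2]
    exact hsum
  -- identify coefficients
  have hφd : AnalyticAt ℂ (deriv φ) 0 := aderiv hφa
  set D : ℂ → ℂ := fun t => -deriv φ t with hDdef
  have hDa : AnalyticAt ℂ D 0 := hφd.neg
  obtain ⟨q, hq⟩ := id hDa
  set P := FormalMultilinearSeries.ofScalars ℂ η with hPdef
  obtain ⟨t0, hsum0, ht0mem⟩ := (hη.and self_mem_nhdsWithin).exists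
  have ht0 : t0 ≠ 0 := ht0mem
  have hPrad : 0 < P.radius := by
    have hnorm : Tendsto (fun m => ‖P m‖ * (‖t0‖₊ : ℝ) ^ m) atTop (𝓝 0) := by
      have h1 := hsum0.summable.tendsto_atTop_zero.norm
      simp only [norm_zero] at h1
      have : (fun m => ‖P m‖ * (‖t0‖₊ : ℝ) ^ m) = fun m => ‖η m * t0 ^ m‖ := by
        funext m
        rw [FormalMultilinearSeries.ofScalars_norm, norm_mul, norm_pow, coe_nnnorm]
      rw [this]
      exact h1
    calc (0 : ENNReal) < ‖t0‖₊ := by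
          simpa using (nnnorm_pos.mpr ht0)
      _ ≤ P.radius := P.le_radius_of_tendsto hnorm
  have hPball : HasFPowerSeriesOnBall P.sum P 0 P.radius := P.hasFPowerSeriesOnBall hPrad
  have hDP : D =ᶠ[𝓝[≠] (0:ℂ)] P.sum := by
    have hball : ∀ᶠ t in 𝓝 (0:ℂ), t ∈ EMetric.ball (0:ℂ) P.radius := by
      filter_upwards [EMetric.ball_mem_nhds (0:ℂ) hPrad] with t ht
      exact ht
    filter_upwards [hderφ, hball.filter_mono nhdsWithin_le_nhds] with t h1 h2
    have h3 : HasSum (fun m => η m * t ^ m) (P.sum t) := by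
      have h4 := hPball.hasSum (y := t) (by simpa using mem_eball_zero_iff.mp h2)
      simp only [zero_add, hPdef, FormalMultilinearSeries.ofScalars_apply_eq,
        smul_eq_mul] at h4
      exact h4
    exact h1.unique h3
  have hD0 : D 0 = P.sum 0 := by
    have l1 : Tendsto D (𝓝[≠] (0:ℂ)) (𝓝 (D 0)) := hDa.continuousAt.continuousWithinAt
    have l2 : Tendsto D (𝓝[≠] (0:ℂ)) (𝓝 (P.sum 0)) :=
      Filter.Tendsto.congr' hDP.symm
        (hPball.hasFPowerSeriesAt.continuousAt.continuousWithinAt)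
    exact tendsto_nhds_unique l1 l2
  have hDPn : D =ᶠ[𝓝 (0:ℂ)] P.sum := by
    have : 𝓝 (0:ℂ) = 𝓝[≠] (0:ℂ) ⊔ pure 0 := (nhdsNE_sup_pure 0).symm
    rw [Filter.EventuallyEq, this, Filter.eventually_sup]
    exact ⟨hDP, Filter.eventually_pure.mpr hD0⟩
  have hqP : q = P := hq.eq_formalMultilinearSeries (hPball.hasFPowerSeriesAt.congr hDPn.symm)
  have hcoeff : ∀ m : ℕ, iteratedDeriv m D 0 = (m.factorial : ℂ) * η m := by
    intro m
    obtain ⟨r, hball⟩ := hq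
    have hfs := hball.factorial_smul (y := (1:ℂ)) m
    rw [iteratedDeriv_eq_iteratedFDeriv, ← hfs, hqP, hPdef,
      FormalMultilinearSeries.ofScalars_apply_eq]
    simp [smul_eq_mul]
  have hφcoeff : ∀ m : ℕ, iteratedDeriv (m + 1) φ 0 = -((m.factorial : ℂ) * η m) := by
    intro m
    have h1 : iteratedDeriv m D 0 = -iteratedDeriv m (deriv φ) 0 := by
      rw [hDdef]
      exact iteratedDeriv_neg m (deriv φ) 0
    have h2 := hcoeff m
    rw [h1] at h2
    rw [iteratedDeriv_succ']
    linear_combination -h2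
  -- rewrite the target function
  have hfun : (fun s : ℂ => s ^ (n - 1) * Complex.log ((s - 1) * riemannZeta s))
      = fun s => s ^ (n - 1) * h s := by
    funext s
    by_cases hs : s = 1
    · subst hs
      rw [hhdef]
      simp [hZ1]
    · rw [hhdef]
      simp only []
      rw [hZne s hs]
  rw [liOsc, hfun]
  -- shift to 0
  have hshift : iteratedDeriv n (fun s : ℂ => s ^ (n - 1) * h s) 1
      = iteratedDeriv n (fun t : ℂ => (1 + t) ^ (n - 1) * φ t) 0 := by
    have h2 := congrFun (iteratedDeriv_comp_const_add n (fun s : ℂ => s ^ (n - 1) * h s) 1) 0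
    rw [add_zero] at h2
    exact h2.symm
  rw [hshift]
  -- binomial expansion
  have hbinom : (fun t : ℂ => (1 + t) ^ (n - 1) * φ t)
      = fun t => ∑ i ∈ Finset.range n, ((n - 1).choose i : ℂ) * (t ^ i * φ t) := by
    funext t
    rw [add_comm (1:ℂ) t, add_pow, Finset.sum_mul]
    rw [show n - 1 + 1 = n from Nat.succ_pred_eq_of_pos hn]
    apply Finset.sum_congr rfl
    intro i _
    rw [one_pow]
    ring
  rw [hbinom]
  have hid : AnalyticAt ℂ (fun t : ℂ => t) 0 := analyticAt_id
  have hterm : ∀ i ∈ Finset.range n,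
      AnalyticAt ℂ (fun t : ℂ => ((n - 1).choose i : ℂ) * (t ^ i * φ t)) 0 :=
    fun i _ => analyticAt_const.mul ((hid.pow i).mul hφa)
  rw [iteratedDeriv_sum_analytic _ _ _ hterm n]
  -- compute each term
  have hval : ∀ i ∈ Finset.range n,
      iteratedDeriv n (fun t : ℂ => ((n - 1).choose i : ℂ) * (t ^ i * φ t)) 0
        = -(((n - 1).choose i : ℂ) * (n.descFactorial i : ℂ)
            * ((n - 1 - i).factorial : ℂ) * η (n - 1 - i)) := by
    intro i hi
    have hi' : i < n := Finset.mem_range.mp hi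
    rw [iteratedDeriv_const_mul_analytic ((hid.fun_pow i).fun_mul hφa) _ n,
      iteratedDeriv_pow_mul hφa i n (le_of_lt hi')]
    rw [show n - i = (n - 1 - i) + 1 by omega, hφcoeff (n - 1 - i)]
    ring
  rw [Finset.sum_congr rfl hval]
  -- Gamma value
  have hΓ : Complex.Gamma (n : ℂ) = ((n - 1).factorial : ℂ) := by
    rw [show ((n : ℂ)) = ((n - 1 : ℕ) : ℂ) + 1 by
      rw [Nat.cast_sub hn]; push_cast; ring]
    exact Complex.Gamma_nat_eq_factorial (n - 1)
  rw [hΓ]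
  -- reindex the right-hand side
  have hrhs : ∑ j ∈ Finset.Icc 1 n, (n.choose j : ℂ) * η (j - 1)
      = ∑ i ∈ Finset.range n, (n.choose i : ℂ) * η (n - 1 - i) := by
    refine Finset.sum_nbij' (fun j => n - j) (fun i => n - i) ?_ ?_ ?_ ?_ ?_
    · intro j hj
      simp only [Finset.mem_Icc] at hj
      simp only [Finset.mem_range]
      omega
    · intro i hi
      simp only [Finset.mem_range] at hi
      simp only [Finset.mem_Icc]
      omega
    · intro j hj
      simp only [Finset.mem_Icc] at hj
      show n - (n - j) = j
      omega
    · intro i hi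
      simp only [Finset.mem_range] at hi
      show n - (n - i) = i
      omega
    · intro j hj
      simp only [Finset.mem_Icc] at hj
      rw [Nat.choose_symm (by omega), show n - 1 - (n - j) = j - 1 by omega]
  rw [hrhs, ← Finset.sum_neg_distrib, Finset.mul_sum]
  apply Finset.sum_congr rfl
  intro i hi
  have hi' : i < n := Finset.mem_range.mp hi
  have key : ((n - 1).choose i) * (n.descFactorial i) * ((n - 1 - i).factorial)
      = (n.choose i) * ((n - 1).factorial) := by
    rw [Nat.descFactorial_eq_factorial_mul_choose]
    have h3 : (n - 1).choose i * i.factorial * (n - 1 - i).factorial = (n - 1).factorial :=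
      Nat.choose_mul_factorial_mul_factorial (by omega)
    calc (n - 1).choose i * (i.factorial * n.choose i) * (n - 1 - i).factorial
        = n.choose i * ((n - 1).choose i * i.factorial * (n - 1 - i).factorial) := by ring
      _ = n.choose i * (n - 1).factorial := by rw [h3]
  have keyC : (((n - 1).choose i : ℂ)) * ((n.descFactorial i : ℂ))
      * (((n - 1 - i).factorial : ℂ)) = ((n.choose i : ℂ)) * (((n - 1).factorial : ℂ)) := by
    exact_mod_cast congrArg (Nat.cast (R := ℂ)) key
  have hfne : (((n - 1).factorial : ℂ)) ≠ 0 := Nat.cast_ne_zero.mpr (Nat.factorial_ne_zero _)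
  field_simp
  linear_combination (-1) * η (n - 1 - i) * keyC
end
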